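/- Suppose ε_k = ε is constant and q_{ik} = q_i is constant in k (Q_3-representation), with g_i ≠ 0 for i = 0,1,2 (i.e., ε ≠ 1/2). Then the graph Γ_f = {(x, f(x)) : x ∈ [0,1]} satisfies Γ_f^i = φ_i(Γ_f) for each i ∈ {0,1,2}, where Γ_f^i = {(x, f(x)) : x ∈ Δ_i} is the part of the graph over the first-level cylinder Δ_i and φ_i is the affine map φ_i(x,y) = (q_i x + β_i, g_i y + δ_i). In particular, the graph is self-affine: Γ_f = φ_0(Γ_f) ∪ φ_1(Γ_f) ∪ φ_2(Γ_f). -/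

import Mathlib

open Finset

/-- g_{ik}: factors determined by the sequence (ε_k); indices 0-based. -/
noncomputable def gq (ε : ℕ → ℝ) (i : Fin 3) (k : ℕ) : ℝ :=
  if i = 1 then (1 - 2 * ε k) / 3 else (1 + ε k) / 3

/-- δ_{ik}: δ_{0k}=0, δ_{1k}=g_{0k}, δ_{2k}=g_{0k}+g_{1k}. -/
noncomputable def dq (ε : ℕ → ℝ) (i : Fin 3) (k : ℕ) : ℝ :=
  if i = 0 then 0 else if i = 1 then gq ε 0 k else gq ε 0 k + gq ε 1 k

/-- F((α_k)) = δ_{α_1 1} + Σ_{k≥2} δ_{α_k k} Π_{j=1}^{k-1} g_{α_j j} (0-based indexing). -/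
noncomputable def F (ε : ℕ → ℝ) (α : ℕ → Fin 3) : ℝ :=
  ∑' k : ℕ, dq ε (α k) k * ∏ j ∈ Finset.range k, gq ε (α j) j
/-- β_{ik}: β_{0k}=0, β_{1k}=q_{0k}, β_{2k}=q_{0k}+q_{1k}. -/
noncomputable def bq (q : Fin 3 → ℕ → ℝ) (i : Fin 3) (k : ℕ) : ℝ :=
  if i = 0 then 0 else if i = 1 then q 0 k else q 0 k + q 1 k

/-- The number with Q*_3-digits (α_k): x = β_{α_1 1} + Σ_{k≥2} β_{α_k k} Π_{j=1}^{k-1} q_{α_j j}. -/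
noncomputable def Xval (q : Fin 3 → ℕ → ℝ) (α : ℕ → Fin 3) : ℝ :=
  ∑' k : ℕ, bq q (α k) k * ∏ j ∈ Finset.range k, q (α j) j

noncomputable def gg (ε : ℝ) (i : Fin 3) : ℝ := gq (fun _ => ε) i 0
noncomputable def dd (ε : ℝ) (i : Fin 3) : ℝ := dq (fun _ => ε) i 0
noncomputable def bb (q : Fin 3 → ℝ) (i : Fin 3) : ℝ := bq (fun i _ => q i) i 0

lemma X_eq (q : Fin 3 → ℝ) (α : ℕ → Fin 3) :
    Xval (fun i _ => q i) α = ∑' k, bb q (α k) * ∏ j ∈ range k, q (α j) := rfl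

lemma F_eq (ε : ℝ) (α : ℕ → Fin 3) :
    F (fun _ => ε) α = ∑' k, dd ε (α k) * ∏ j ∈ range k, gg ε (α j) := rfl

section Aux
variable {q : Fin 3 → ℝ} {ε : ℝ}

lemma bb_nonneg (hq : ∀ i, 0 < q i) (i : Fin 3) : 0 ≤ bb q i := by
  have := hq 0; have := hq 1
  fin_cases i <;> simp [bb, bq] <;> linarith

lemma bb_add_q_le_one (hq : ∀ i, 0 < q i) (hsum : q 0 + q 1 + q 2 = 1) (i : Fin 3) :
    bb q i + q i ≤ 1 := by
  have := hq 0; have := hq 1; have := hq 2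
  fin_cases i <;> simp [bb, bq] <;> linarith

lemma q_le_one (hq : ∀ i, 0 < q i) (hsum : q 0 + q 1 + q 2 = 1) (i : Fin 3) : q i ≤ 1 := by
  have h1 := bb_add_q_le_one hq hsum i
  have h2 := bb_nonneg hq i
  linarith

lemma gg_abs (hε0 : 0 ≤ ε) (hε1 : ε ≤ 1) (i : Fin 3) : |gg ε i| ≤ 2/3 := by
  fin_cases i <;> simp [gg, gq, abs_le] <;> constructor <;> linarith

lemma dd_abs (hε0 : 0 ≤ ε) (hε1 : ε ≤ 1) (i : Fin 3) : |dd ε i| ≤ 1 := by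
  fin_cases i <;> simp [dd, dq, gq, abs_le] <;> constructor <;> linarith

lemma sumX (hq : ∀ i, 0 < q i) (hsum : q 0 + q 1 + q 2 = 1) (α : ℕ → Fin 3) :
    Summable (fun k => bb q (α k) * ∏ j ∈ range k, q (α j)) := by
  set c := max (q 0) (max (q 1) (q 2)) with hc
  have hle : ∀ i : Fin 3, q i ≤ c := by
    intro i; fin_cases i
    · exact le_max_left _ _
    · exact le_trans (le_max_left _ _) (le_max_right _ _)
    · exact le_trans (le_max_right _ _) (le_max_right _ _)
  have hc1 : c < 1 := by
    have := hq 0; have := hq 1; have := hq 2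
    simp only [hc, max_lt_iff]; refine ⟨by linarith, by linarith, by linarith⟩
  have hc0 : 0 ≤ c := le_trans (hq 0).le (le_max_left _ _)
  apply Summable.of_nonneg_of_le (f := fun k => c ^ k)
  · intro k
    exact mul_nonneg (bb_nonneg hq _) (Finset.prod_nonneg fun j _ => (hq _).le)
  · intro k
    calc bb q (α k) * ∏ j ∈ range k, q (α j) ≤ 1 * ∏ j ∈ range k, q (α j) := by
          apply mul_le_mul_of_nonneg_right _ (Finset.prod_nonneg fun j _ => (hq _).le)
          have := bb_add_q_le_one hq hsum (α k); have := hq (α k); linarith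
      _ = ∏ j ∈ range k, q (α j) := one_mul _
      _ ≤ ∏ j ∈ range k, c := Finset.prod_le_prod (fun j _ => (hq _).le)
          (fun j _ => hle _)
      _ = c ^ k := by rw [Finset.prod_const, card_range]
  · exact summable_geometric_of_lt_one hc0 hc1

lemma sumF (hε0 : 0 ≤ ε) (hε1 : ε ≤ 1) (α : ℕ → Fin 3) :
    Summable (fun k => dd ε (α k) * ∏ j ∈ range k, gg ε (α j)) := by
  apply Summable.of_norm_bounded (g := fun k => (2/3 : ℝ) ^ k)
    (summable_geometric_of_lt_one (by norm_num) (by norm_num))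
  intro k
  rw [norm_mul, Real.norm_eq_abs, Real.norm_eq_abs]
  calc |dd ε (α k)| * |∏ j ∈ range k, gg ε (α j)| ≤ 1 * ((2/3:ℝ)^k) := by
        apply mul_le_mul (dd_abs hε0 hε1 _) _ (abs_nonneg _) zero_le_one
        rw [Finset.abs_prod]
        calc ∏ j ∈ range k, |gg ε (α j)| ≤ ∏ j ∈ range k, (2/3 : ℝ) :=
            Finset.prod_le_prod (fun j _ => abs_nonneg _) (fun j _ => gg_abs hε0 hε1 _)
          _ = (2/3:ℝ)^k := by rw [Finset.prod_const, card_range]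
    _ = (2/3:ℝ)^k := one_mul _

end Aux

section Aux2
variable {q : Fin 3 → ℝ} {ε : ℝ}

lemma shiftX (hq : ∀ i, 0 < q i) (hsum : q 0 + q 1 + q 2 = 1) (α : ℕ → Fin 3) :
    Xval (fun i _ => q i) α
      = bb q (α 0) + q (α 0) * Xval (fun i _ => q i) (fun n => α (n + 1)) := by
  rw [X_eq, X_eq, Summable.tsum_eq_zero_add (sumX hq hsum α)]
  congr 1
  · simp
  · rw [← tsum_mul_left]
    apply tsum_congr
    intro k
    rw [Finset.prod_range_succ']
    ring

lemma shiftF (hε0 : 0 ≤ ε) (hε1 : ε ≤ 1) (α : ℕ → Fin 3) :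
    F (fun _ => ε) α
      = dd ε (α 0) + gg ε (α 0) * F (fun _ => ε) (fun n => α (n + 1)) := by
  rw [F_eq, F_eq, Summable.tsum_eq_zero_add (sumF hε0 hε1 α)]
  congr 1
  · simp
  · rw [← tsum_mul_left]
    apply tsum_congr
    intro k
    rw [Finset.prod_range_succ']
    ring

lemma X_nonneg (hq : ∀ i, 0 < q i) (α : ℕ → Fin 3) :
    0 ≤ Xval (fun i _ => q i) α := by
  rw [X_eq]
  exact tsum_nonneg fun k =>
    mul_nonneg (bb_nonneg hq _) (Finset.prod_nonneg fun j _ => (hq _).le)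

lemma X_le_one (hq : ∀ i, 0 < q i) (hsum : q 0 + q 1 + q 2 = 1) (α : ℕ → Fin 3) :
    Xval (fun i _ => q i) α ≤ 1 := by
  rw [X_eq]
  have key : ∀ N, (∑ k ∈ range N, bb q (α k) * ∏ j ∈ range k, q (α j))
      + ∏ j ∈ range N, q (α j) ≤ 1 := by
    intro N
    induction N with
    | zero => simp
    | succ n ih =>
      rw [Finset.sum_range_succ, Finset.prod_range_succ]
      have hb := bb_add_q_le_one hq hsum (α n)
      have hp : (0:ℝ) ≤ ∏ j ∈ range n, q (α j) :=
        Finset.prod_nonneg fun j _ => (hq _).le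
      nlinarith [hq (α n), bb_nonneg hq (α n)]
  apply Summable.tsum_le_of_sum_range_le (sumX hq hsum α)
  intro n
  have := key n
  have hp : (0:ℝ) ≤ ∏ j ∈ range n, q (α j) :=
    Finset.prod_nonneg fun j _ => (hq _).le
  linarith

lemma X_eq_one_step (hq : ∀ i, 0 < q i) (hsum : q 0 + q 1 + q 2 = 1) (α : ℕ → Fin 3)
    (h : Xval (fun i _ => q i) α = 1) :
    α 0 = 2 ∧ Xval (fun i _ => q i) (fun n => α (n + 1)) = 1 := by
  rw [shiftX hq hsum] at h
  set s := Xval (fun i _ => q i) (fun n => α (n + 1)) with hs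
  have hs0 : 0 ≤ s := X_nonneg hq _
  have hs1 : s ≤ 1 := X_le_one hq hsum _
  have h0 := hq 0; have h1 := hq 1; have h2 := hq 2
  have ha : α 0 = 2 := by
    have htri : α 0 = 0 ∨ α 0 = 1 ∨ α 0 = 2 := by omega
    rcases htri with hcase | hcase | hcase <;> rw [hcase] at h <;>
      simp [bb, bq] at h <;> first | nlinarith | exact hcase
  rw [ha] at h
  refine ⟨ha, ?_⟩
  simp [bb, bq] at h
  nlinarith
end Aux2

section Aux3
variable {q : Fin 3 → ℝ} {ε : ℝ}

lemma X_eq_zero_step (hq : ∀ i, 0 < q i) (hsum : q 0 + q 1 + q 2 = 1) (α : ℕ → Fin 3)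
    (h : Xval (fun i _ => q i) α = 0) :
    α 0 = 0 ∧ Xval (fun i _ => q i) (fun n => α (n + 1)) = 0 := by
  rw [shiftX hq hsum] at h
  set s := Xval (fun i _ => q i) (fun n => α (n + 1)) with hs
  have hs0 : 0 ≤ s := X_nonneg hq _
  have h0 := hq 0; have h1 := hq 1; have h2 := hq 2
  have hbn := bb_nonneg hq (α 0)
  have hqn := hq (α 0)
  have hb0 : bb q (α 0) = 0 := by nlinarith
  have ha : α 0 = 0 := by
    have htri : α 0 = 0 ∨ α 0 = 1 ∨ α 0 = 2 := by omega
    rcases htri with hcase | hcase | hcase <;> rw [hcase] at hb0 <;>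
      simp [bb, bq] at hb0 <;> first | exact hcase | nlinarith
  refine ⟨ha, ?_⟩
  rw [hb0] at h
  have : q (α 0) * s = 0 := by linarith
  rcases mul_eq_zero.1 this with h' | h'
  · exact absurd h' (ne_of_gt hqn)
  · exact h'

lemma X_eq_one_all (hq : ∀ i, 0 < q i) (hsum : q 0 + q 1 + q 2 = 1) :
    ∀ (n : ℕ) (α : ℕ → Fin 3), Xval (fun i _ => q i) α = 1 → α n = 2 := by
  intro n
  induction n with
  | zero => exact fun α h => (X_eq_one_step hq hsum α h).1
  | succ m ih =>
    intro α h
    exact ih (fun k => α (k + 1)) (X_eq_one_step hq hsum α h).2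

lemma X_eq_zero_all (hq : ∀ i, 0 < q i) (hsum : q 0 + q 1 + q 2 = 1) :
    ∀ (n : ℕ) (α : ℕ → Fin 3), Xval (fun i _ => q i) α = 0 → α n = 0 := by
  intro n
  induction n with
  | zero => exact fun α h => (X_eq_zero_step hq hsum α h).1
  | succ m ih =>
    intro α h
    exact ih (fun k => α (k + 1)) (X_eq_zero_step hq hsum α h).2

lemma F_two (hε0 : 0 ≤ ε) (hε1 : ε ≤ 1) : F (fun _ => ε) (fun _ => 2) = 1 := by
  rw [F_eq]
  have hg : gg ε 2 = (1 + ε)/3 := rfl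
  have hd : dd ε 2 = (1 + ε)/3 + (1 - 2*ε)/3 := rfl
  have : ∀ k : ℕ, dd ε 2 * ∏ _j ∈ range k, gg ε 2 = dd ε 2 * ((1+ε)/3) ^ k := by
    intro k; rw [Finset.prod_const, card_range, hg]
  rw [tsum_congr this, tsum_mul_left, tsum_geometric_of_lt_one (by linarith) (by linarith)]
  have h23 : (1:ℝ) - (1+ε)/3 ≠ 0 := by intro h'; nlinarith
  rw [hd, mul_inv_eq_one₀ h23]
  ring

lemma F_zero : F (fun _ => ε) (fun _ => 0) = 0 := by
  rw [F_eq]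
  have hd : dd ε 0 = 0 := rfl
  simp [hd]

end Aux3

section Aux4
variable {q : Fin 3 → ℝ} {ε : ℝ}

lemma base_lt (hq : ∀ i, 0 < q i) (hsum : q 0 + q 1 + q 2 = 1) (hε0 : 0 ≤ ε) (hε1 : ε ≤ 1)
    (a b : ℕ → Fin 3) (h : Xval (fun i _ => q i) a = Xval (fun i _ => q i) b)
    (hlt : (a 0 : ℕ) < (b 0 : ℕ)) : F (fun _ => ε) a = F (fun _ => ε) b := by
  rw [shiftX hq hsum a, shiftX hq hsum b] at h
  have hs0 := X_nonneg hq (fun n => a (n+1))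
  have hs1 := X_le_one hq hsum (fun n => a (n+1))
  have ht0 := X_nonneg hq (fun n => b (n+1))
  have ht1 := X_le_one hq hsum (fun n => b (n+1))
  have h0 := hq 0; have h1 := hq 1; have h2 := hq 2
  rw [shiftF hε0 hε1 a, shiftF hε0 hε1 b]
  have htri : (a 0 = 0 ∧ b 0 = 1) ∨ (a 0 = 0 ∧ b 0 = 2) ∨ (a 0 = 1 ∧ b 0 = 2) := by
    omega
  rcases htri with ⟨ha, hb⟩ | ⟨ha, hb⟩ | ⟨ha, hb⟩ <;> rw [ha, hb] at h ⊢ <;>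
      simp [bb, bq] at h
  · have hs : Xval (fun i _ => q i) (fun n => a (n+1)) = 1 := by nlinarith
    have ht : Xval (fun i _ => q i) (fun n => b (n+1)) = 0 := by nlinarith
    have ea : (fun n => a (n+1)) = (fun _ => (2:Fin 3)) :=
      funext fun n => X_eq_one_all hq hsum n _ hs
    have eb : (fun n => b (n+1)) = (fun _ => (0:Fin 3)) :=
      funext fun n => X_eq_zero_all hq hsum n _ ht
    rw [ea, eb, F_two hε0 hε1, F_zero]
    have e1 : dd ε 0 = 0 := rfl
    have e2 : gg ε 0 = (1+ε)/3 := rfl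
    have e3 : dd ε 1 = (1+ε)/3 := rfl
    rw [e1, e2, e3]; ring
  · exfalso
    nlinarith [mul_nonneg h2.le ht0, mul_nonneg h0.le (sub_nonneg.mpr hs1)]
  · have hs : Xval (fun i _ => q i) (fun n => a (n+1)) = 1 := by nlinarith
    have ht : Xval (fun i _ => q i) (fun n => b (n+1)) = 0 := by nlinarith
    have ea : (fun n => a (n+1)) = (fun _ => (2:Fin 3)) :=
      funext fun n => X_eq_one_all hq hsum n _ hs
    have eb : (fun n => b (n+1)) = (fun _ => (0:Fin 3)) :=
      funext fun n => X_eq_zero_all hq hsum n _ ht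
    rw [ea, eb, F_two hε0 hε1, F_zero]
    have e1 : dd ε 1 = (1+ε)/3 := rfl
    have e2 : gg ε 1 = (1-2*ε)/3 := rfl
    have e3 : dd ε 2 = (1+ε)/3 + (1-2*ε)/3 := rfl
    rw [e1, e2, e3]; ring

lemma baseNe (hq : ∀ i, 0 < q i) (hsum : q 0 + q 1 + q 2 = 1) (hε0 : 0 ≤ ε) (hε1 : ε ≤ 1)
    (a b : ℕ → Fin 3) (h : Xval (fun i _ => q i) a = Xval (fun i _ => q i) b)
    (hne : a 0 ≠ b 0) : F (fun _ => ε) a = F (fun _ => ε) b := by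
  have : (a 0 : ℕ) ≠ (b 0 : ℕ) := fun hc => hne (Fin.ext hc)
  rcases lt_or_gt_of_ne this with hlt | hlt
  · exact base_lt hq hsum hε0 hε1 a b h hlt
  · exact (base_lt hq hsum hε0 hε1 b a h.symm hlt).symm

lemma WDaux (hq : ∀ i, 0 < q i) (hsum : q 0 + q 1 + q 2 = 1) (hε0 : 0 ≤ ε) (hε1 : ε ≤ 1) :
    ∀ (n : ℕ) (a b : ℕ → Fin 3), (∀ j, j < n → a j = b j) → a n ≠ b n →
      Xval (fun i _ => q i) a = Xval (fun i _ => q i) b →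
      F (fun _ => ε) a = F (fun _ => ε) b := by
  intro n
  induction n with
  | zero => exact fun a b _ hne h => baseNe hq hsum hε0 hε1 a b h hne
  | succ m ih =>
    intro a b hpre hne h
    have h0 : a 0 = b 0 := hpre 0 (Nat.succ_pos m)
    rw [shiftX hq hsum a, shiftX hq hsum b, h0] at h
    have ht : Xval (fun i _ => q i) (fun n => a (n+1))
        = Xval (fun i _ => q i) (fun n => b (n+1)) :=
      mul_left_cancel₀ (ne_of_gt (hq (b 0))) (by linarith)
    have hF := ih (fun k => a (k+1)) (fun k => b (k+1))
      (fun j hj => hpre (j+1) (by omega)) hne ht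
    rw [shiftF hε0 hε1 a, shiftF hε0 hε1 b, h0, hF]

lemma WD (hq : ∀ i, 0 < q i) (hsum : q 0 + q 1 + q 2 = 1) (hε0 : 0 ≤ ε) (hε1 : ε ≤ 1)
    (a b : ℕ → Fin 3) (h : Xval (fun i _ => q i) a = Xval (fun i _ => q i) b) :
    F (fun _ => ε) a = F (fun _ => ε) b := by
  by_cases hab : ∃ n, a n ≠ b n
  · classical
    exact WDaux hq hsum hε0 hε1 (Nat.find hab) a b
      (fun j hj => not_not.1 (Nat.find_min hab hj)) (Nat.find_spec hab) h
  · push_neg at hab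
    exact congrArg _ (funext hab)

end Aux4

section Main
variable {q : Fin 3 → ℝ} {ε : ℝ}

lemma consX (hq : ∀ i, 0 < q i) (hsum : q 0 + q 1 + q 2 = 1) (i : Fin 3) (a : ℕ → Fin 3) :
    Xval (fun i _ => q i) (fun n => Nat.casesOn n i a)
      = bb q i + q i * Xval (fun i _ => q i) a :=
  shiftX hq hsum _

lemma consF (hε0 : 0 ≤ ε) (hε1 : ε ≤ 1) (i : Fin 3) (a : ℕ → Fin 3) :
    F (fun _ => ε) (fun n => Nat.casesOn n i a)
      = dd ε i + gg ε i * F (fun _ => ε) a :=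
  shiftF hε0 hε1 _

lemma key (hq : ∀ i, 0 < q i) (hsum : q 0 + q 1 + q 2 = 1) (hε0 : 0 ≤ ε) (hε1 : ε ≤ 1)
    (α : ℝ → ℕ → Fin 3)
    (hα : ∀ x ∈ Set.Icc (0:ℝ) 1, Xval (fun i _ => q i) (α x) = x)
    (i : Fin 3) (y : ℝ) (hy : y ∈ Set.Icc (0:ℝ) 1) :
    F (fun _ => ε) (α (q i * y + bb q i)) = dd ε i + gg ε i * F (fun _ => ε) (α y) := by
  have hβ0 : 0 ≤ bb q i := bb_nonneg hq i
  have hβq : bb q i + q i ≤ 1 := bb_add_q_le_one hq hsum i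
  have hqi := hq i
  have hx01 : q i * y + bb q i ∈ Set.Icc (0:ℝ) 1 := by
    constructor
    · nlinarith [hy.1]
    · nlinarith [hy.2]
  have hXx := hα _ hx01
  have hXy := hα y hy
  have hXc : Xval (fun i _ => q i) (fun n => Nat.casesOn n i (α y)) = q i * y + bb q i := by
    rw [consX hq hsum i (α y), hXy]; ring
  rw [WD hq hsum hε0 hε1 (α _) (fun n => Nat.casesOn n i (α y)) (by rw [hXx, hXc]),
    consF hε0 hε1 i (α y)]

lemma main (q : Fin 3 → ℝ) (hq : ∀ i, 0 < q i) (hsum : q 0 + q 1 + q 2 = 1)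
    (ε : ℝ) (hε0 : 0 ≤ ε) (hε1 : ε ≤ 1)
    (α : ℝ → ℕ → Fin 3)
    (hα : ∀ x ∈ Set.Icc (0 : ℝ) 1, Xval (fun i _ => q i) (α x) = x) :
    (∀ i : Fin 3,
      {p : ℝ × ℝ | ∃ x ∈ Set.Icc (bb q i) (bb q i + q i), p = (x, F (fun _ => ε) (α x))}
        = (fun p : ℝ × ℝ => (q i * p.1 + bb q i, gg ε i * p.2 + dd ε i)) ''
            {p : ℝ × ℝ | ∃ x ∈ Set.Icc (0:ℝ) 1, p = (x, F (fun _ => ε) (α x))}) ∧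
    {p : ℝ × ℝ | ∃ x ∈ Set.Icc (0:ℝ) 1, p = (x, F (fun _ => ε) (α x))}
      = ((fun p : ℝ × ℝ => (q 0 * p.1 + bb q 0, gg ε 0 * p.2 + dd ε 0)) ''
            {p : ℝ × ℝ | ∃ x ∈ Set.Icc (0:ℝ) 1, p = (x, F (fun _ => ε) (α x))})
        ∪ ((fun p : ℝ × ℝ => (q 1 * p.1 + bb q 1, gg ε 1 * p.2 + dd ε 1)) ''
            {p : ℝ × ℝ | ∃ x ∈ Set.Icc (0:ℝ) 1, p = (x, F (fun _ => ε) (α x))})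
        ∪ ((fun p : ℝ × ℝ => (q 2 * p.1 + bb q 2, gg ε 2 * p.2 + dd ε 2)) ''
            {p : ℝ × ℝ | ∃ x ∈ Set.Icc (0:ℝ) 1, p = (x, F (fun _ => ε) (α x))}) := by
  have P : ∀ i : Fin 3,
      {p : ℝ × ℝ | ∃ x ∈ Set.Icc (bb q i) (bb q i + q i), p = (x, F (fun _ => ε) (α x))}
        = (fun p : ℝ × ℝ => (q i * p.1 + bb q i, gg ε i * p.2 + dd ε i)) ''
            {p : ℝ × ℝ | ∃ x ∈ Set.Icc (0:ℝ) 1, p = (x, F (fun _ => ε) (α x))} := by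
    intro i
    have hβ0 : 0 ≤ bb q i := bb_nonneg hq i
    have hβq : bb q i + q i ≤ 1 := bb_add_q_le_one hq hsum i
    have hqi := hq i
    ext p
    simp only [Set.mem_setOf_eq, Set.mem_image]
    constructor
    · rintro ⟨x, hx, rfl⟩
      have hy0 : 0 ≤ (x - bb q i) / q i := div_nonneg (by linarith [hx.1]) hqi.le
      have hy1 : (x - bb q i) / q i ≤ 1 := by
        rw [div_le_one hqi]; linarith [hx.2]
      have hxy : q i * ((x - bb q i) / q i) + bb q i = x := by field_simp; ring
      refine ⟨((x - bb q i) / q i, F (fun _ => ε) (α ((x - bb q i) / q i))),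
        ⟨(x - bb q i) / q i, ⟨hy0, hy1⟩, rfl⟩, ?_⟩
      have hkey := key hq hsum hε0 hε1 α hα i ((x - bb q i) / q i) ⟨hy0, hy1⟩
      rw [hxy] at hkey
      rw [Prod.ext_iff]
      exact ⟨hxy, by rw [hkey]; ring⟩
    · rintro ⟨p', ⟨y, hy, rfl⟩, rfl⟩
      have hkey := key hq hsum hε0 hε1 α hα i y hy
      refine ⟨q i * y + bb q i, ⟨by nlinarith [hy.1], by nlinarith [hy.2]⟩, ?_⟩
      rw [Prod.ext_iff]
      exact ⟨rfl, by rw [hkey]; ring⟩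
  refine ⟨P, ?_⟩
  have e0 : bb q 0 = 0 := rfl
  have e1 : bb q 1 = q 0 := rfl
  have e2 : bb q 2 = q 0 + q 1 := rfl
  apply Set.Subset.antisymm
  · rintro p ⟨x, hx, rfl⟩
    rcases le_or_gt x (q 0) with hx0 | hx0
    · left; left
      rw [← P 0]
      exact ⟨x, ⟨by rw [e0]; exact hx.1, by rw [e0]; simpa using hx0⟩, rfl⟩
    rcases le_or_gt x (q 0 + q 1) with hx1 | hx1
    · left; right
      rw [← P 1]
      exact ⟨x, ⟨by rw [e1]; exact hx0.le, by rw [e1]; exact hx1⟩, rfl⟩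
    · right
      rw [← P 2]
      refine ⟨x, ⟨by rw [e2]; exact hx1.le, by rw [e2]; linarith [hx.2]⟩, rfl⟩
  · rintro p ((hp | hp) | hp)
    · rw [← P 0] at hp
      obtain ⟨x, hx, rfl⟩ := hp
      have h0 := bb_nonneg hq 0
      have h1 := bb_add_q_le_one hq hsum 0
      exact ⟨x, ⟨by linarith [hx.1], by linarith [hx.2]⟩, rfl⟩
    · rw [← P 1] at hp
      obtain ⟨x, hx, rfl⟩ := hp
      have h0 := bb_nonneg hq 1
      have h1 := bb_add_q_le_one hq hsum 1
      exact ⟨x, ⟨by linarith [hx.1], by linarith [hx.2]⟩, rfl⟩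
    · rw [← P 2] at hp
      obtain ⟨x, hx, rfl⟩ := hp
      have h0 := bb_nonneg hq 2
      have h1 := bb_add_q_le_one hq hsum 2
      exact ⟨x, ⟨by linarith [hx.1], by linarith [hx.2]⟩, rfl⟩

end Main

theorem stmt15 (q : Fin 3 → ℝ) (hq : ∀ i, 0 < q i) (hsum : q 0 + q 1 + q 2 = 1)
    (ε : ℝ) (hε : 0 ≤ ε ∧ ε ≤ 1) (hεne : ε ≠ 1 / 2)
    (α : ℝ → ℕ → Fin 3)
    (hα : ∀ x ∈ Set.Icc (0 : ℝ) 1, Xval (fun i _ => q i) (α x) = x) :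
    let g : Fin 3 → ℝ := fun i => if i = 1 then (1 - 2 * ε) / 3 else (1 + ε) / 3
    let δ : Fin 3 → ℝ := fun i => if i = 0 then 0 else
      if i = 1 then (1 + ε) / 3 else (1 + ε) / 3 + (1 - 2 * ε) / 3
    let β : Fin 3 → ℝ := fun i => if i = 0 then 0 else
      if i = 1 then q 0 else q 0 + q 1
    let f : ℝ → ℝ := fun x => F (fun _ => ε) (α x)
    let Γ : Set (ℝ × ℝ) := {p | ∃ x ∈ Set.Icc (0 : ℝ) 1, p = (x, f x)}
    let φ : Fin 3 → ℝ × ℝ → ℝ × ℝ := fun i p => (q i * p.1 + β i, g i * p.2 + δ i)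
    (∀ i : Fin 3,
      {p : ℝ × ℝ | ∃ x ∈ Set.Icc (β i) (β i + q i), p = (x, f x)} = φ i '' Γ) ∧
    Γ = (φ 0 '' Γ) ∪ (φ 1 '' Γ) ∪ (φ 2 '' Γ) := by
  intro g δ β f Γ φ
  exact main q hq hsum ε hε.1 hε.2 α hα
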